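/- Let F : ℝⁿ → ℝⁿ be a payment-free Shapley operator, i.e., F is monotone, additively homogeneous and positively homogeneous. Then for each i ∈ {1,…,n}, setting A_i := { a ∈ ℝⁿ | F_i(a) = 0 }, there exists for every a ∈ A_i a finite set B_{i,a} of stochastic vectors of ℝⁿ, each having at most two positive coordinates, such that for all x ∈ ℝⁿ, F_i(x) = min_{a ∈ A_i} max_{b ∈ B_{i,a}} ⟨b, x⟩, the minimum over A_i being attained. -/

import Mathlib

open Finset

private lemma stmt16_sum_single {n : ℕ} (j : Fin n) (x : Fin n → ℝ) :
    ∑ m, (Pi.single j 1 : Fin n → ℝ) m * x m = x j := by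
  simp [Pi.single_apply, ite_mul]

private lemma stmt16_sum_pair {n : ℕ} (j k : Fin n) (c d : ℝ) (x : Fin n → ℝ) :
    ∑ m, ((c • (Pi.single j 1 : Fin n → ℝ) + d • (Pi.single k 1 : Fin n → ℝ)) m) * x m
      = c * x j + d * x k := by
  simp [Pi.single_apply, add_mul, mul_ite, ite_mul, Finset.sum_add_distrib]

/-- Let `F : ℝⁿ → ℝⁿ` be a payment-free Shapley operator (monotone, additively
homogeneous and positively homogeneous). Then for each coordinate `i`, with
`A_i = {a | F a i = 0}`, there is for every `a ∈ A_i` a finite set `B a` of stochastic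
vectors, each with at most two positive coordinates, such that for all `x`,
`F x i = min_{a ∈ A_i} max_{b ∈ B a} ⟨b, x⟩`, the minimum over `A_i` being attained. -/
theorem stmt16 {n : ℕ} (hn : 0 < n) (F : (Fin n → ℝ) → Fin n → ℝ)
    (hmono : Monotone F)
    (hadd : ∀ (x : Fin n → ℝ) (c : ℝ), F (x + c • (1 : Fin n → ℝ)) = F x + c • 1)
    (hpos : ∀ (c : ℝ), 0 ≤ c → ∀ x : Fin n → ℝ, F (c • x) = c • F x) :
    ∀ i : Fin n, ∃ B : (Fin n → ℝ) → Finset (Fin n → ℝ),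
      (∀ a : Fin n → ℝ, F a i = 0 → ∀ b ∈ B a,
        (∀ j, 0 ≤ b j) ∧ (∑ j, b j = 1) ∧
          (Finset.univ.filter fun j => 0 < b j).card ≤ 2) ∧
      ∀ x : Fin n → ℝ,
        IsLeast {r : ℝ | ∃ a : Fin n → ℝ, F a i = 0 ∧
          IsGreatest {s : ℝ | ∃ b ∈ B a, s = ∑ j, b j * x j} r} (F x i) := by
  classical
  intro i
  have hne : (univ : Finset (Fin n)).Nonempty := ⟨⟨0, hn⟩, mem_univ _⟩
  have hF0 : F 0 = 0 := by
    have := hpos 0 le_rfl 0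
    simpa using this
  have hone : ∀ c : ℝ, F (c • (1 : Fin n → ℝ)) = c • 1 := by
    intro c
    have := hadd 0 c
    simpa [hF0] using this
  -- existence of a nonpositive and a nonnegative coordinate for a ∈ A_i
  have hex_le : ∀ a : Fin n → ℝ, F a i = 0 → ∃ j, a j ≤ 0 := by
    intro a ha
    by_contra hcon
    push_neg at hcon
    obtain ⟨j, -, hj⟩ := Finset.exists_mem_eq_inf' hne a
    set m := univ.inf' hne a with hm
    have hm0 : 0 < m := hj ▸ hcon j
    have hle : (m • (1 : Fin n → ℝ)) ≤ a := by
      intro k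
      have : m ≤ a k := Finset.inf'_le a (mem_univ k)
      simpa using this
    have := hmono hle i
    rw [hone m, ha] at this
    simp only [Pi.smul_apply, Pi.one_apply, smul_eq_mul, mul_one] at this
    linarith
  have hex_ge : ∀ a : Fin n → ℝ, F a i = 0 → ∃ k, 0 ≤ a k := by
    intro a ha
    by_contra hcon
    push_neg at hcon
    obtain ⟨j, -, hj⟩ := Finset.exists_mem_eq_sup' hne a
    set m := univ.sup' hne a with hm
    have hm0 : m < 0 := hj ▸ hcon j
    have hle : a ≤ (m • (1 : Fin n → ℝ)) := by
      intro k
      have : a k ≤ m := Finset.le_sup' a (mem_univ k)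
      simpa using this
    have := hmono hle i
    rw [hone m, ha] at this
    simp only [Pi.smul_apply, Pi.one_apply, smul_eq_mul, mul_one] at this
    linarith
  -- the construction of B
  refine ⟨fun a =>
    ((univ.filter fun j => a j ≤ 0).image fun j => (Pi.single j 1 : Fin n → ℝ)) ∪
    (((univ ×ˢ univ).filter fun p : Fin n × Fin n => a p.1 < 0 ∧ 0 < a p.2).image fun p =>
      (a p.2 / (a p.2 - a p.1)) • (Pi.single p.1 1 : Fin n → ℝ) +
      (-(a p.1) / (a p.2 - a p.1)) • (Pi.single p.2 1 : Fin n → ℝ)), ?_, ?_⟩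
  · -- stochasticity and ≤ 2 positive coordinates
    intro a _ b hb
    rw [mem_union] at hb
    rcases hb with hb | hb
    · obtain ⟨j, -, rfl⟩ := mem_image.mp hb
      refine ⟨fun m => ?_, ?_, ?_⟩
      · simp only [Pi.single_apply]
        split <;> norm_num
      · simp [Pi.single_apply]
      · refine le_trans (Finset.card_le_card ?_) (by simp : ({j} : Finset (Fin n)).card ≤ 2)
        intro m hm
        simp only [mem_filter, mem_univ, true_and, Pi.single_apply] at hm
        simp only [mem_singleton]
        by_contra hmj
        rw [if_neg hmj] at hm
        exact lt_irrefl 0 hm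
    · obtain ⟨p, hp, rfl⟩ := mem_image.mp hb
      simp only [mem_filter, Finset.mem_product] at hp
      obtain ⟨-, h1, h2⟩ := hp
      have hd : 0 < a p.2 - a p.1 := by linarith
      have hc : 0 ≤ a p.2 / (a p.2 - a p.1) := div_nonneg h2.le hd.le
      have hcd : 0 ≤ -(a p.1) / (a p.2 - a p.1) := div_nonneg (by linarith) hd.le
      refine ⟨fun m => ?_, ?_, ?_⟩
      · simp only [Pi.add_apply, Pi.smul_apply, Pi.single_apply, smul_eq_mul]
        have t1 : (0:ℝ) ≤ if m = p.1 then (1:ℝ) else 0 := by split <;> norm_num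
        have t2 : (0:ℝ) ≤ if m = p.2 then (1:ℝ) else 0 := by split <;> norm_num
        exact add_nonneg (mul_nonneg hc t1) (mul_nonneg hcd t2)
      · simp only [Pi.add_apply, Pi.smul_apply, Pi.single_apply, smul_eq_mul,
          Finset.sum_add_distrib, mul_ite, mul_one, mul_zero, Finset.sum_ite_eq', mem_univ,
          if_true]
        field_simp
        ring
      · refine le_trans (Finset.card_le_card ?_)
          (le_trans (Finset.card_insert_le p.1 {p.2}) (by simp))
        intro m hm
        simp only [mem_filter, mem_univ, true_and, Pi.add_apply, Pi.smul_apply,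
          Pi.single_apply, smul_eq_mul] at hm
        simp only [mem_insert, mem_singleton]
        by_contra hmj
        push_neg at hmj
        rw [if_neg hmj.1, if_neg hmj.2] at hm
        simp at hm
  · -- the min-max representation
    intro x
    constructor
    · -- membership: take a = x - (F x i) • 1
      set c := F x i with hc
      set a : Fin n → ℝ := x - c • (1 : Fin n → ℝ) with hadef
      have hxa : ∀ m, x m = a m + c := by
        intro m; simp [hadef]
      have haz : F a i = 0 := by
        have h := hadd a c
        have hax : a + c • (1 : Fin n → ℝ) = x := by
          funext m; simp [hadef]
        rw [hax] at h
        have := congrFun h i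
        simp only [Pi.add_apply, Pi.smul_apply, Pi.one_apply, smul_eq_mul, mul_one] at this
        linarith [this]
      refine ⟨a, haz, ?_, ?_⟩
      · -- F x i is attained
        by_cases hj0 : ∃ j', a j' = 0
        · obtain ⟨j', hj'⟩ := hj0
          refine ⟨(Pi.single j' 1 : Fin n → ℝ), mem_union_left _
            (mem_image.mpr ⟨j', by simp [hj'.le], rfl⟩), ?_⟩
          rw [stmt16_sum_single, hxa j', hj']
          ring
        · push_neg at hj0
          obtain ⟨j, hj⟩ := hex_le a haz
          obtain ⟨k, hk⟩ := hex_ge a haz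
          have hj' : a j < 0 := lt_of_le_of_ne hj (hj0 j)
          have hk' : 0 < a k := lt_of_le_of_ne hk (Ne.symm (hj0 k))
          have hd : 0 < a k - a j := by linarith
          refine ⟨_, mem_union_right _ (mem_image.mpr ⟨(j, k), by
            simp only [mem_filter, Finset.mem_product, mem_univ, and_self, true_and]
            exact ⟨hj', hk'⟩, rfl⟩), ?_⟩
          rw [stmt16_sum_pair, hxa j, hxa k]
          field_simp
          ring
      · -- F x i is an upper bound over B a
        rintro s ⟨b, hb, rfl⟩
        rw [mem_union] at hb
        rcases hb with hb | hb
        · obtain ⟨j, hj, rfl⟩ := mem_image.mp hb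
          simp only [mem_filter, mem_univ, true_and] at hj
          rw [stmt16_sum_single, hxa j]
          linarith
        · obtain ⟨p, hp, rfl⟩ := mem_image.mp hb
          simp only [mem_filter, Finset.mem_product] at hp
          obtain ⟨-, h1, h2⟩ := hp
          have hd : 0 < a p.2 - a p.1 := by linarith
          rw [stmt16_sum_pair, hxa p.1, hxa p.2]
          have : a p.2 / (a p.2 - a p.1) * (a p.1 + c) + -(a p.1) / (a p.2 - a p.1) * (a p.2 + c)
              = c := by
            field_simp
            ring
          linarith [this.le]
    · -- lower bound
      rintro r ⟨a, haz, -, hub⟩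
      have hi : ∀ j, a j ≤ 0 → x j ≤ r := by
        intro j hj
        have : (∑ m, (Pi.single j 1 : Fin n → ℝ) m * x m) ≤ r :=
          hub ⟨(Pi.single j 1 : Fin n → ℝ), mem_union_left _
            (mem_image.mpr ⟨j, by simp [hj], rfl⟩), rfl⟩
        rwa [stmt16_sum_single] at this
      have hii : ∀ j k, a j < 0 → 0 < a k → a k * (x j - r) ≤ a j * (x k - r) := by
        intro j k h1 h2
        have hd : 0 < a k - a j := by linarith
        have hmem : ((j, k) : Fin n × Fin n) ∈
            (univ ×ˢ univ).filter fun p : Fin n × Fin n => a p.1 < 0 ∧ 0 < a p.2 :=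
          mem_filter.mpr ⟨Finset.mem_product.mpr ⟨mem_univ _, mem_univ _⟩, h1, h2⟩
        have hle : a k / (a k - a j) * x j + -(a j) / (a k - a j) * x k ≤ r := by
          have := hub ⟨_, mem_union_right _ (mem_image.mpr ⟨(j, k), hmem, rfl⟩), rfl⟩
          rwa [stmt16_sum_pair] at this
        rw [div_mul_eq_mul_div, div_mul_eq_mul_div, ← add_div, div_le_iff₀ hd] at hle
        nlinarith [hle]
      set g : Fin n → ℝ := fun k => if 0 < a k then (x k - r) / a k else 0 with hg
      set α : ℝ := max (univ.sup' hne g) 0 with hα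
      have hα0 : 0 ≤ α := le_max_right _ _
      have hbound : ∀ m, x m ≤ α * a m + r := by
        intro m
        rcases lt_trichotomy (a m) 0 with hm | hm | hm
        · have hxm : x m ≤ r := hi m hm.le
          obtain ⟨k0, -, hk0⟩ := Finset.exists_mem_eq_sup' hne g
          rw [hα, hk0]
          rcases le_total (g k0) 0 with h | h
          · rw [max_eq_right h]; linarith
          · rw [max_eq_left h]
            by_cases hk : 0 < a k0
            · have hiik := hii m k0 hm hk
              have hgEq : g k0 = (x k0 - r) / a k0 := if_pos hk
              rw [hgEq]
              have hq : (x k0 - r) / a k0 * a k0 = x k0 - r := div_mul_cancel₀ _ hk.ne'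
              rw [hgEq] at h
              nlinarith [hiik, hq, hk, hm, h]
            · have hgEq : g k0 = 0 := if_neg hk
              rw [hgEq]; linarith
        · have := hi m hm.le
          rw [hm, mul_zero, zero_add]; linarith
        · have hgEq : g m = (x m - r) / a m := if_pos hm
          have hle : g m ≤ α := le_trans (Finset.le_sup' g (mem_univ m)) (le_max_left _ _)
          rw [hgEq] at hle
          have := (div_le_iff₀ hm).mp hle
          linarith
      have hle : x ≤ α • a + r • (1 : Fin n → ℝ) := by
        intro m
        simpa [mul_comm] using hbound m
      have hmle := hmono hle i
      rw [hadd (α • a) r, hpos α hα0 a] at hmle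
      simpa [haz] using hmle
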